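/- Define J_rot(ℰ) := (1/(√2·π)) ∫_{φ=−π}^{π} √(cos φ + ℰ) dφ for ℰ > 1. Then at every ℰ > 1 the function J_rot is differentiable with derivative J_rot'(ℰ) = (1/π) · √(2/(1+ℰ)) · K(2/(1+ℰ)). -/

import Mathlib

open MeasureTheory Real

/-- The complete elliptic integral of the first kind,
`K(m) = ∫₀¹ ds/(√(1−s²)·√(1−m s²))`. -/
noncomputable def ellipticK (m : ℝ) : ℝ :=
  ∫ s in (0 : ℝ)..1, 1 / (Real.sqrt (1 - s ^ 2) * Real.sqrt (1 - m * s ^ 2))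

/-- The Whitham modulation quantity for superluminal rotational wavetrains,
`J_rot(ℰ) = (1/(√2 π)) ∫_{−π}^{π} √(cos φ + ℰ) dφ`, for `ℰ > 1`. -/
noncomputable def J_rot (E : ℝ) : ℝ :=
  (1 / (Real.sqrt 2 * Real.pi)) * ∫ φ in (-Real.pi)..Real.pi, Real.sqrt (Real.cos φ + E)

open Set in
lemma key_subst (E : ℝ) (hE : 1 < E) :
    ellipticK (2 / (1 + E))
      = (Real.sqrt (1 + E) / 2) * ∫ φ in (0:ℝ)..Real.pi, 1 / Real.sqrt (Real.cos φ + E) := by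
  have h1E : (0:ℝ) < 1 + E := by linarith
  set m : ℝ := 2 / (1 + E) with hm
  set f : ℝ → ℝ := fun φ => Real.sin (φ / 2) with hf
  set f' : ℝ → ℝ := fun φ => Real.cos (φ / 2) / 2 with hf'
  set g : ℝ → ℝ := fun s => 1 / (Real.sqrt (1 - s ^ 2) * Real.sqrt (1 - m * s ^ 2)) with hg
  have himg : f '' Ioo 0 Real.pi = Ioo 0 1 := by
    ext y
    constructor
    · rintro ⟨φ, hφ, rfl⟩
      have h2 : φ / 2 < Real.pi / 2 := by linarith [hφ.2]
      refine ⟨Real.sin_pos_of_pos_of_lt_pi (by linarith [hφ.1]) (by linarith [Real.pi_pos]), ?_⟩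
      calc Real.sin (φ/2) < Real.sin (Real.pi/2) :=
            Real.strictMonoOn_sin ⟨by linarith [hφ.1, Real.pi_pos], by linarith⟩
              ⟨by linarith [Real.pi_pos], le_refl _⟩ h2
        _ = 1 := Real.sin_pi_div_two
    · rintro ⟨hy0, hy1⟩
      have ha0 : 0 < Real.arcsin y := Real.arcsin_pos.2 hy0
      have ha1 : Real.arcsin y < Real.pi / 2 := Real.arcsin_lt_pi_div_two.2 (by linarith)
      exact ⟨2 * Real.arcsin y, ⟨by linarith, by linarith⟩, by
        simp [hf, Real.sin_arcsin (by linarith : (-1:ℝ) ≤ y) hy1.le]⟩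
  have hderiv : ∀ φ ∈ Ioo (0:ℝ) Real.pi, HasDerivWithinAt f (f' φ) (Ioo 0 Real.pi) φ := by
    intro φ _
    have hd : HasDerivAt (fun x : ℝ => x / 2) (1/2 : ℝ) φ := by
      simpa using (hasDerivAt_id φ).div_const 2
    have h : HasDerivAt f (Real.cos (φ/2) * (1/2)) φ := by
      have := (Real.hasDerivAt_sin (φ/2)).comp φ hd; exact this
    have h2 : HasDerivAt f (f' φ) φ := by
      convert h using 1; simp [hf']; ring
    exact h2.hasDerivWithinAt
  have hinj : InjOn f (Ioo 0 Real.pi) := by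
    intro a ha b hb hab
    have hab' : Real.sin (a/2) = Real.sin (b/2) := hab
    have h := Real.strictMonoOn_sin.injOn
      (⟨by linarith [ha.1, Real.pi_pos], by linarith [ha.2]⟩ :
        a/2 ∈ Icc (-(Real.pi/2)) (Real.pi/2))
      (⟨by linarith [hb.1, Real.pi_pos], by linarith [hb.2]⟩ :
        b/2 ∈ Icc (-(Real.pi/2)) (Real.pi/2)) hab'
    linarith
  have main := integral_image_eq_integral_abs_deriv_smul measurableSet_Ioo hderiv hinj g
  rw [himg] at main
  have hRHS : ∀ φ ∈ Ioo (0:ℝ) Real.pi,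
      |f' φ| • g (f φ) = (Real.sqrt (1+E)/2) * (1 / Real.sqrt (Real.cos φ + E)) := by
    intro φ hφ
    have hc : 0 < Real.cos (φ/2) :=
      Real.cos_pos_of_mem_Ioo ⟨by linarith [hφ.1, Real.pi_pos], by linarith [hφ.2]⟩
    have hs1 : 1 - Real.sin (φ/2) ^ 2 = Real.cos (φ/2) ^ 2 := by
      have := Real.sin_sq_add_cos_sq (φ/2); linarith
    have hcosφ : Real.cos φ = 1 - 2 * Real.sin (φ/2) ^ 2 := by
      have h2 := Real.cos_two_mul (φ/2)
      have h3 := Real.sin_sq_add_cos_sq (φ/2)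
      have : (2:ℝ) * (φ/2) = φ := by ring
      rw [this] at h2; linarith
    have hcE : 0 < Real.cos φ + E := by
      have := Real.neg_one_le_cos φ; linarith
    have hms : 1 - m * Real.sin (φ/2) ^ 2 = (Real.cos φ + E) / (1 + E) := by
      rw [hcosφ, hm]; field_simp; ring
    have hsE : (0:ℝ) < Real.sqrt (1 + E) := Real.sqrt_pos.2 h1E
    have hscE : (0:ℝ) < Real.sqrt (Real.cos φ + E) := Real.sqrt_pos.2 hcE
    simp only [hg, hf, hf', smul_eq_mul]
    rw [hs1, hms, Real.sqrt_sq hc.le, Real.sqrt_div hcE.le,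
      abs_of_pos (by positivity : (0:ℝ) < Real.cos (φ/2) / 2)]
    field_simp
  have hset : ∫ φ in Ioo (0:ℝ) Real.pi, |f' φ| • g (f φ)
      = ∫ φ in Ioo (0:ℝ) Real.pi, (Real.sqrt (1+E)/2) * (1 / Real.sqrt (Real.cos φ + E)) :=
    setIntegral_congr_fun measurableSet_Ioo hRHS
  rw [hset, integral_const_mul] at main
  rw [ellipticK]
  rw [intervalIntegral.integral_of_le Real.pi_pos.le,
    intervalIntegral.integral_of_le (le_refl (0:ℝ) |>.trans zero_le_one),
    integral_Ioc_eq_integral_Ioo, integral_Ioc_eq_integral_Ioo]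
  exact main

/-- **Derivative of the rotational averaged integral.** For every `ℰ > 1`, `J_rot` is
differentiable at `ℰ` with `J_rot'(ℰ) = (1/π) √(2/(1+ℰ)) K(2/(1+ℰ))`. -/
theorem J_rot_hasDerivAt (E : ℝ) (hE : 1 < E) :
    HasDerivAt J_rot ((1 / Real.pi) * Real.sqrt (2 / (1 + E)) * ellipticK (2 / (1 + E))) E := by
  have h1E : (0:ℝ) < 1 + E := by linarith
  have hεpos : (0:ℝ) < (E - 1) / 2 := by linarith
  -- positivity on the ball
  have hball : ∀ x ∈ Metric.ball E ((E-1)/2), ∀ t : ℝ, (E-1)/2 < Real.cos t + x := by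
    intro x hx t
    rw [Metric.mem_ball, Real.dist_eq, abs_lt] at hx
    have := Real.neg_one_le_cos t
    linarith [hx.1]
  have hcE : ∀ t : ℝ, 0 < Real.cos t + E := by
    intro t; have := Real.neg_one_le_cos t; linarith
  have key := intervalIntegral.hasDerivAt_integral_of_dominated_loc_of_deriv_le
    (F := fun x φ => Real.sqrt (Real.cos φ + x))
    (F' := fun x φ => 1 / (2 * Real.sqrt (Real.cos φ + x)))
    (x₀ := E) (a := -Real.pi) (b := Real.pi) (μ := volume)
    (bound := fun _ => 1 / (2 * Real.sqrt ((E-1)/2))) (Metric.ball_mem_nhds E hεpos)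
    ?_ ?_ ?_ ?_ ?_ ?_
  · -- assemble
    obtain ⟨-, hD⟩ := key
    have hD' := hD.const_mul (1 / (Real.sqrt 2 * Real.pi))
    have hfun : (fun x => (1 / (Real.sqrt 2 * Real.pi)) *
        ∫ φ in (-Real.pi)..Real.pi, Real.sqrt (Real.cos φ + x)) = J_rot := rfl
    rw [hfun] at hD'
    refine hD'.congr_deriv (Eq.symm ?_)
    -- value of the derivative
    have hcont : Continuous fun φ : ℝ => 1 / (2 * Real.sqrt (Real.cos φ + E)) := by
      apply Continuous.div continuous_const
      · exact continuous_const.mul ((Real.continuous_cos.add continuous_const).sqrt)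
      · intro t
        have := hcE t
        positivity
    have hsplit : (∫ φ in (-Real.pi)..Real.pi, 1 / (2 * Real.sqrt (Real.cos φ + E)))
        = 2 * ∫ φ in (0:ℝ)..Real.pi, 1 / (2 * Real.sqrt (Real.cos φ + E)) := by
      have h1 : (∫ φ in (-Real.pi)..(0:ℝ), 1 / (2 * Real.sqrt (Real.cos φ + E)))
          = ∫ φ in (0:ℝ)..Real.pi, 1 / (2 * Real.sqrt (Real.cos φ + E)) := by
        have := intervalIntegral.integral_comp_neg
          (a := (0:ℝ)) (b := Real.pi) (fun φ => 1 / (2 * Real.sqrt (Real.cos φ + E)))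
        simp only [Real.cos_neg, neg_zero] at this
        rw [← this]
      rw [← intervalIntegral.integral_add_adjacent_intervals
        (hcont.intervalIntegrable (-Real.pi) 0) (hcont.intervalIntegrable 0 Real.pi), h1]
      ring
    have hhalf : (∫ φ in (0:ℝ)..Real.pi, 1 / (2 * Real.sqrt (Real.cos φ + E)))
        = (1/2) * ∫ φ in (0:ℝ)..Real.pi, 1 / Real.sqrt (Real.cos φ + E) := by
      rw [← intervalIntegral.integral_const_mul]
      apply intervalIntegral.integral_congr
      intro t _
      show 1 / (2 * Real.sqrt (Real.cos t + E)) = 1/2 * (1 / Real.sqrt (Real.cos t + E))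
      ring
    rw [hsplit, hhalf]
    have hK := key_subst E hE
    have hsE : (0:ℝ) < Real.sqrt (1 + E) := Real.sqrt_pos.2 h1E
    have hs2 : (0:ℝ) < Real.sqrt 2 := by positivity
    have hIπ : (∫ φ in (0:ℝ)..Real.pi, 1 / Real.sqrt (Real.cos φ + E))
        = (2 / Real.sqrt (1+E)) * ellipticK (2 / (1 + E)) := by
      rw [hK]; field_simp
    rw [hIπ]
    have hsq : Real.sqrt (2 / (1 + E)) = Real.sqrt 2 / Real.sqrt (1+E) :=
      Real.sqrt_div (by norm_num) _
    rw [hsq]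
    have h22 : Real.sqrt 2 * Real.sqrt 2 = 2 := Real.mul_self_sqrt (by norm_num)
    field_simp
    ring_nf
    rw [Real.sq_sqrt (by norm_num : (0:ℝ) ≤ 2)]
    ring
  · -- hF_meas
    filter_upwards with x
    exact ((Real.continuous_cos.add continuous_const).sqrt).aestronglyMeasurable
  · -- hF_int
    exact ((Real.continuous_cos.add continuous_const).sqrt).intervalIntegrable _ _
  · -- hF'_meas
    apply Continuous.aestronglyMeasurable
    apply Continuous.div continuous_const
    · exact continuous_const.mul ((Real.continuous_cos.add continuous_const).sqrt)
    · intro t; have := hcE t; positivity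
  · -- h_bound
    filter_upwards with t ht x hx
    have h1 : (E-1)/2 < Real.cos t + x := hball x hx t
    have h2 : Real.sqrt ((E-1)/2) ≤ Real.sqrt (Real.cos t + x) := Real.sqrt_le_sqrt h1.le
    have h3 : (0:ℝ) < Real.sqrt ((E-1)/2) := Real.sqrt_pos.2 hεpos
    have h4 : (0:ℝ) < Real.sqrt (Real.cos t + x) := lt_of_lt_of_le h3 h2
    rw [Real.norm_eq_abs, abs_of_pos (by positivity : (0:ℝ) < 1 / (2 * Real.sqrt (Real.cos t + x)))]
    apply one_div_le_one_div_of_le (by positivity)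
    linarith
  · -- bound integrable
    exact intervalIntegrable_const
  · -- h_diff
    filter_upwards with t ht x hx
    have h1 : 0 < Real.cos t + x := lt_trans hεpos (hball x hx t)
    have hd : HasDerivAt (fun x : ℝ => Real.cos t + x) 1 x := by
      simpa using (hasDerivAt_id x).const_add (Real.cos t)
    have := (Real.hasDerivAt_sqrt (ne_of_gt h1)).comp x hd
    exact this.congr_deriv (by ring)
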